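/- For n ≥ 3, the DFA A^{-bcd} with states {1,...,n} and only symbols a and e has shortest synchronizing word length n^2 - 3n + 4; in particular, (ea^{n-2})^{n-2}ae is a synchronizing word of this length, using that 1·ea^{n-2} = 1, 2·ea^{n-2} = 2 and q·ea^{n-2} = q-1 for 3 ≤ q ≤ n. -/

import Mathlib

/-- `w` is a synchronizing word for the DFA with transition function `δ`. -/
def IsSyncWord {n k : ℕ} (δ : Fin k → Fin n → Fin n) (w : List (Fin k)) : Prop :=
  ∃ qs : Fin n, ∀ q : Fin n, w.foldl (fun s x => δ x s) q = qs

/-- Length of a shortest synchronizing word of the DFA `δ`. -/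
noncomputable def shortestSync {n k : ℕ} (δ : Fin k → Fin n → Fin n) : ℕ :=
  sInf {L | ∃ w : List (Fin k), IsSyncWord δ w ∧ w.length = L}

/- Symbols on `Fin n` (state `i+1` of `{1,...,n}` is index `i`, addition cyclic). -/
def mapA (n : ℕ) [NeZero n] : Fin n → Fin n := fun q => q + 1
def mapE (n : ℕ) [NeZero n] : Fin n → Fin n := fun q =>
  if q = 0 then 2 else if q = 1 then 3 else if q = 2 then 3 else q + 1

/-- The DFA `A^{-bcd}` with the two symbols `a` (index 0) and `e` (index 1). -/
def deltaAe (n : ℕ) [NeZero n] : Fin 2 → Fin n → Fin n :=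
  ![mapA n, mapE n]

open Fin.CommRing

/-! ### Auxiliary machinery -/

namespace AeAux

/-- `DD n a b` is `(a - b) mod n` for `a b < n`, written without `%`. -/
def DD (n a b : ℕ) : ℕ := if b ≤ a then a - b else a + n - b

/-- Alignment cost of a point `p` : `(1 - p) mod n`. -/
def AA (n : ℕ) [NeZero n] (p : Fin n) : ℕ := DD n 1 p.val

/-- Largest cyclic distance from `p` back to another member of `S`. -/
def GG (n : ℕ) [NeZero n] (S : Finset (Fin n)) (p : Fin n) : ℕ :=
  (S.erase p).sup fun q => DD n q.val p.val

/-- The candidate term for point `p`. -/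
def trm (n : ℕ) [NeZero n] (S : Finset (Fin n)) (p : Fin n) : ℕ :=
  AA n p + 1 + (n - 1) * (GG n S p - 1)

/-- The potential function: lower bound for the length of a word synchronizing `S`. -/
def phi (n : ℕ) [NeZero n] (S : Finset (Fin n)) : ℕ :=
  if h : 2 ≤ S.card then
    S.inf' (Finset.card_pos.mp (by omega)) (trm n S) else 0

variable {n : ℕ} [NeZero n]

lemma val_one (hn : 3 ≤ n) : ((1 : Fin n) : ℕ) = 1 := by
  rw [Fin.val_one' n]; exact Nat.mod_eq_of_lt (by omega)

lemma val_two (hn : 3 ≤ n) : ((2 : Fin n) : ℕ) = 2 := by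
  have h : ((2 : Fin n) : ℕ) = 2 % n := rfl
  rw [h]; exact Nat.mod_eq_of_lt (by omega)

lemma val_three (hn : 3 ≤ n) : ((3 : Fin n) : ℕ) = 3 % n := rfl

lemma val_zero : ((0 : Fin n) : ℕ) = 0 := rfl

lemma mod3 (hn : 3 ≤ n) : (n = 3 ∧ 3 % n = 0) ∨ (4 ≤ n ∧ 3 % n = 3) := by
  rcases Nat.lt_or_ge n 4 with h | h
  · left
    have h3 : n = 3 := by omega
    subst h3
    exact ⟨rfl, rfl⟩
  · right; exact ⟨h, Nat.mod_eq_of_lt (by omega)⟩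

lemma val_add_one (hn : 3 ≤ n) (q : Fin n) :
    ((q + 1 : Fin n) : ℕ) = (q.val + 1) % n := by
  rw [Fin.add_def, val_one hn]

lemma val_sub (a b : Fin n) : ((a - b : Fin n) : ℕ) = DD n a.val b.val := by
  have ha := a.isLt
  have hb := b.isLt
  have hpos : 0 < n := Nat.pos_of_ne_zero (NeZero.ne n)
  rw [Fin.sub_def]
  simp only [DD]
  split_ifs with h
  · have h1 : n - b.val + a.val = n + (a.val - b.val) := by omega
    rw [h1, Nat.add_mod_left, Nat.mod_eq_of_lt (by omega)]
  · exact (Nat.mod_eq_of_lt (by omega)).trans (by omega)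

lemma fin_val_ne {a b : Fin n} (h : a ≠ b) : a.val ≠ b.val :=
  fun hv => h (Fin.ext hv)

/-- Case description of the value of `mapE`. -/
lemma mapE_val (hn : 3 ≤ n) (q : Fin n) :
    (q.val = 0 ∧ (mapE n q).val = 2) ∨
    ((q.val = 1 ∨ q.val = 2) ∧ (mapE n q).val = 3 % n) ∨
    (3 ≤ q.val ∧ q.val + 1 < n ∧ (mapE n q).val = q.val + 1) ∨
    (3 ≤ q.val ∧ q.val = n - 1 ∧ (mapE n q).val = 0) := by
  have hlt := q.isLt
  have h1 := val_one (n := n) hn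
  have h2 := val_two (n := n) hn
  by_cases h0 : q = 0
  · left; subst h0; exact ⟨rfl, by simpa [mapE] using h2⟩
  · have hv0 : q.val ≠ 0 := fin_val_ne h0
    by_cases hq1 : q = 1
    · right; left; subst hq1
      exact ⟨Or.inl h1, by simp only [mapE, if_neg h0, if_pos rfl]; rfl⟩
    · have hv1 : q.val ≠ 1 := fun h => hq1 (Fin.ext (by rw [h, h1]))
      by_cases hq2 : q = 2
      · right; left; subst hq2
        exact ⟨Or.inr h2, by simp only [mapE, if_neg h0, if_neg hq1, if_pos rfl]; rfl⟩
      · have hv2 : q.val ≠ 2 := fun h => hq2 (Fin.ext (by rw [h, h2]))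
        have heq : (mapE n q).val = (q.val + 1) % n := by
          simp only [mapE, if_neg h0, if_neg hq1, if_neg hq2]
          exact val_add_one hn q
        rcases Nat.lt_or_ge (q.val + 1) n with h | h
        · right; right; left
          exact ⟨by omega, h, by rw [heq, Nat.mod_eq_of_lt h]⟩
        · right; right; right
          have hqn : q.val = n - 1 := by omega
          refine ⟨by omega, hqn, ?_⟩
          rw [heq]
          have : q.val + 1 = n := by omega
          rw [this, Nat.mod_self]

/-- `mapE` never hits `1`. -/
lemma mapE_ne_one (hn : 3 ≤ n) (q : Fin n) : mapE n q ≠ 1 := by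
  intro h
  have hv := congrArg Fin.val h
  rw [val_one hn] at hv
  have := mapE_val hn q
  have := mod3 (n := n) hn
  omega

/-- Everything other than `1` is in the image of `mapE`. -/
lemma mem_image_mapE (hn : 3 ≤ n) (y : Fin n) (hy : y ≠ 1) :
    y ∈ Finset.univ.image (mapE n) := by
  rw [Finset.mem_image]
  by_cases hy2 : y = 2
  · exact ⟨0, Finset.mem_univ _, by rw [hy2]; simp [mapE]⟩
  · refine ⟨y - 1, Finset.mem_univ _, ?_⟩
    have c0 : y - 1 ≠ 0 := fun h => hy (by rwa [sub_eq_zero] at h)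
    have c1 : y - 1 ≠ 1 := by
      intro h
      apply hy2
      have h' : y = 1 + 1 := by rwa [sub_eq_iff_eq_add] at h
      rw [h', one_add_one_eq_two]
    by_cases c2 : y - 1 = 2
    · have hy3 : y = 3 := by
        have h' : y = 2 + 1 := by rwa [sub_eq_iff_eq_add] at c2
        rw [h', two_add_one_eq_three]
      simp only [mapE, if_neg c0, if_neg c1, if_pos c2]
      exact hy3.symm
    · simp only [mapE, if_neg c0, if_neg c1, if_neg c2, sub_add_cancel]

lemma collision (hn : 3 ≤ n) {a b : Fin n} (h : mapE n a = mapE n b)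
    (hab : a ≠ b) : (a.val = 1 ∧ b.val = 2) ∨ (a.val = 2 ∧ b.val = 1) := by
  have hv := congrArg Fin.val h
  have ha := mapE_val hn a
  have hb := mapE_val hn b
  have hm := mod3 (n := n) hn
  have hne := fin_val_ne hab
  have := a.isLt
  have := b.isLt
  omega

lemma GG_pos {S : Finset (Fin n)} {p : Fin n} (hS : 2 ≤ S.card) (hp : p ∈ S) :
    1 ≤ GG n S p := by
  have : 0 < (S.erase p).card := by rw [Finset.card_erase_of_mem hp]; omega
  obtain ⟨q, hq⟩ := Finset.card_pos.mp this
  have hqp : q ≠ p := (Finset.mem_erase.mp hq).1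
  have h1 : 1 ≤ DD n q.val p.val := by
    have := fin_val_ne hqp
    have := q.isLt
    have := p.isLt
    simp only [DD]; split_ifs <;> omega
  show 1 ≤ (S.erase p).sup (fun r => DD n r.val p.val)
  exact le_trans h1 (Finset.le_sup (f := fun r => DD n r.val p.val) hq)

lemma phi_eq (S : Finset (Fin n)) (h : 2 ≤ S.card) :
    phi n S = S.inf' (Finset.card_pos.mp (by omega)) (trm n S) := dif_pos h

lemma phi_le (S : Finset (Fin n)) (h : 2 ≤ S.card) {p : Fin n} (hp : p ∈ S) :
    phi n S ≤ trm n S p := by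
  rw [phi_eq S h]; exact Finset.inf'_le _ hp

/-- The final numeric step combining A- and G-inequalities. -/
lemma trm_step {a a' g g' : ℕ} (hn : 3 ≤ n)
    (hg1 : 1 ≤ g) (hg1' : 1 ≤ g')
    (hkey : a + (n - 1) * g ≤ a' + 1 + (n - 1) * g') :
    a + 1 + (n - 1) * (g - 1) ≤ a' + 1 + (n - 1) * (g' - 1) + 1 := by
  have e1 : g = (g - 1) + 1 := by omega
  have e2 : g' = (g' - 1) + 1 := by omega
  rw [e1, e2, Nat.mul_add, Nat.mul_add, Nat.mul_one] at hkey
  linarith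

end AeAux

open AeAux Finset

namespace AeAux

variable {n : ℕ} [NeZero n]

/-- Lipschitz property for letter `a`. -/
lemma lipA (hn : 3 ≤ n) (S : Finset (Fin n)) :
    phi n S ≤ phi n (S.image (mapA n)) + 1 := by
  by_cases h2 : 2 ≤ S.card
  swap
  · rw [phi, dif_neg h2]; omega
  have hinj : Function.Injective (mapA n) := fun a b h => by
    simpa [mapA] using h
  set T := S.image (mapA n) with hTdef
  have hT2 : 2 ≤ T.card := by
    rw [hTdef, Finset.card_image_of_injective _ hinj]; exact h2
  have hTne : T.Nonempty := Finset.card_pos.mp (by omega : 0 < T.card)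
  obtain ⟨p', hp'T, hmin⟩ := Finset.exists_mem_eq_inf' hTne (trm n T)
  have hphiT : phi n T = trm n T p' := by rw [phi_eq T hT2]; exact hmin
  obtain ⟨p, hpS, hpp'⟩ := Finset.mem_image.mp hp'T
  have hp'v : p'.val = (p.val + 1) % n := by rw [← hpp']; exact val_add_one hn p
  have hmodp : (p.val + 1 = n ∧ (p.val + 1) % n = 0) ∨
      (p.val + 1 < n ∧ (p.val + 1) % n = p.val + 1) := by
    rcases Nat.lt_or_ge (p.val + 1) n with h | h
    · right; exact ⟨h, Nat.mod_eq_of_lt h⟩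
    · left; have hplt := p.isLt; constructor
      · omega
      · have : p.val + 1 = n := by omega
        rw [this, Nat.mod_self]
  have hA : AA n p ≤ AA n p' + 1 := by
    have := p.isLt
    simp only [AA, DD]
    split_ifs <;> omega
  have hG : GG n S p ≤ GG n T p' := by
    show (S.erase p).sup (fun r => DD n r.val p.val) ≤
      (T.erase p').sup (fun r => DD n r.val p'.val)
    apply Finset.sup_le
    intro q hq
    obtain ⟨hqp, hqS⟩ := Finset.mem_erase.mp hq
    have hmem : mapA n q ∈ T.erase p' := Finset.mem_erase.mpr
      ⟨fun h => hqp (hinj (h.trans hpp'.symm)), Finset.mem_image_of_mem _ hqS⟩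
    refine le_trans ?_ (Finset.le_sup (f := fun r => DD n r.val p'.val) hmem)
    have hqv : (mapA n q).val = (q.val + 1) % n := val_add_one hn q
    have hmodq : (q.val + 1 = n ∧ (q.val + 1) % n = 0) ∨
        (q.val + 1 < n ∧ (q.val + 1) % n = q.val + 1) := by
      rcases Nat.lt_or_ge (q.val + 1) n with h | h
      · right; exact ⟨h, Nat.mod_eq_of_lt h⟩
      · left; have := q.isLt; constructor
        · omega
        · have h' : q.val + 1 = n := by omega
          rw [h', Nat.mod_self]
    have hne := fin_val_ne hqp
    have := q.isLt
    have := p.isLt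
    simp only [DD]
    split_ifs <;> omega
  calc phi n S ≤ trm n S p := phi_le S h2 hpS
    _ ≤ trm n T p' + 1 := by
        apply trm_step hn (GG_pos h2 hpS) (GG_pos hT2 hp'T)
        have hmul : (n - 1) * GG n S p ≤ (n - 1) * GG n T p' :=
          Nat.mul_le_mul_left _ hG
        linarith
    _ = phi n T + 1 := by rw [hphiT]

/-- Lipschitz property for letter `e`. -/
lemma lipE (hn : 3 ≤ n) (S : Finset (Fin n)) :
    phi n S ≤ phi n (S.image (mapE n)) + 1 := by
  by_cases h2 : 2 ≤ S.card
  swap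
  · rw [phi, dif_neg h2]; omega
  set T := S.image (mapE n) with hTdef
  by_cases hT2 : 2 ≤ T.card
  swap
  · -- the merge-to-singleton case : S = {1, 2}
    obtain ⟨x, hx, y, hy, hxy⟩ := Finset.one_lt_card.mp (by omega : 1 < S.card)
    have hall : ∀ a ∈ T, ∀ b ∈ T, a = b := Finset.card_le_one.mp (by omega)
    have hexy : mapE n x = mapE n y :=
      hall _ (Finset.mem_image_of_mem _ hx) _ (Finset.mem_image_of_mem _ hy)
    have hXY := collision hn hexy hxy
    have hvals : ∀ q ∈ S, q.val = 1 ∨ q.val = 2 := by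
      intro q hq
      by_cases hqx : q = x
      · subst hqx; omega
      · have : mapE n q = mapE n x :=
          hall _ (Finset.mem_image_of_mem _ hq) _ (Finset.mem_image_of_mem _ hx)
        have := collision hn this hqx
        omega
    have hsub : S ⊆ {1, 2} := by
      intro q hq
      rcases hvals q hq with h | h
      · exact Finset.mem_insert.mpr (Or.inl (Fin.ext (by rw [h, val_one hn])))
      · exact Finset.mem_insert.mpr (Or.inr (Finset.mem_singleton.mpr
          (Fin.ext (by rw [h, val_two hn]))))
    have h12 : ((1 : Fin n) ≠ (2 : Fin n)) := by
      intro h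
      have := congrArg Fin.val h
      rw [val_one hn, val_two hn] at this
      omega
    have hScard : ({1, 2} : Finset (Fin n)).card = 2 := by
      rw [Finset.card_insert_of_notMem (by simp [h12]), Finset.card_singleton]
    have hSeq : S = {1, 2} := Finset.eq_of_subset_of_card_le hsub (by omega)
    have h1S : (1 : Fin n) ∈ S := by rw [hSeq]; simp
    have htrm : trm n S 1 = 1 := by
      have hGG : GG n S 1 = 1 := by
        rw [hSeq]
        have : ({1, 2} : Finset (Fin n)).erase 1 = {2} := by
          rw [Finset.erase_insert (by simp [h12])]
        rw [GG, this, Finset.sup_singleton]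
        rw [val_one hn, val_two hn]
        simp [DD]
      have hAA : AA n 1 = 0 := by
        rw [AA, val_one hn]; simp [DD]
      rw [trm, hAA, hGG]; simp
    have : phi n S ≤ 1 := le_trans (phi_le S h2 h1S) (le_of_eq htrm)
    omega
  -- main case
  have hTne : T.Nonempty := Finset.card_pos.mp (by omega : 0 < T.card)
  obtain ⟨p', hp'T, hmin⟩ := Finset.exists_mem_eq_inf' hTne (trm n T)
  have hphiT : phi n T = trm n T p' := by rw [phi_eq T hT2]; exact hmin
  obtain ⟨p₀, hp₀S, hpp'⟩ := Finset.mem_image.mp hp'T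
  have hp'G := GG_pos hT2 hp'T
  have hm3 := mod3 (n := n) hn
  have hp₀v := mapE_val hn p₀
  rw [hpp'] at hp₀v
  have hplt := p₀.isLt
  suffices h : ∃ p ∈ S, AA n p + (n - 1) * GG n S p ≤ AA n p' + 1 + (n - 1) * GG n T p' by
    obtain ⟨p, hpS, hkey⟩ := h
    calc phi n S ≤ trm n S p := phi_le S h2 hpS
      _ ≤ trm n T p' + 1 := trm_step hn (GG_pos h2 hpS) hp'G hkey
      _ = phi n T + 1 := by rw [hphiT]
  -- case analysis on p₀
  rcases hp₀v with ⟨hv0, hv'⟩ | ⟨hv12, hv'⟩ | ⟨hv3, hvlt, hv'⟩ | ⟨hv3, hvn, hv'⟩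
  · -- p₀ = 0, p' = 2
    refine ⟨p₀, hp₀S, ?_⟩
    have hG : GG n S p₀ ≤ GG n T p' + 1 := by
      show (S.erase p₀).sup (fun r => DD n r.val p₀.val) ≤ GG n T p' + 1
      apply Finset.sup_le
      intro q hq
      obtain ⟨hqp, hqS⟩ := Finset.mem_erase.mp hq
      have hqv := mapE_val hn q
      have hqlt := q.isLt
      have hqnev := fin_val_ne hqp
      have hne : mapE n q ≠ p' := by
        intro h
        have hv := congrArg Fin.val h
        exact hqp (Fin.ext (by omega))
      have hmem : mapE n q ∈ T.erase p' :=
        Finset.mem_erase.mpr ⟨hne, Finset.mem_image_of_mem _ hqS⟩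
      have hstep : DD n q.val p₀.val ≤ DD n (mapE n q).val p'.val + 1 := by
        simp only [DD]; split_ifs <;> omega
      exact le_trans hstep (Nat.add_le_add_right (Finset.le_sup (f := fun r => DD n r.val p'.val) hmem) 1)
    have hAp : AA n p₀ = 1 := by simp only [AA, DD]; split_ifs <;> omega
    have hAp' : AA n p' = n - 1 := by simp only [AA, DD]; split_ifs <;> omega
    have hmul : (n - 1) * GG n S p₀ ≤ (n - 1) * GG n T p' + (n - 1) := by
      calc (n - 1) * GG n S p₀ ≤ (n - 1) * (GG n T p' + 1) :=
            Nat.mul_le_mul_left _ hG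
        _ = (n - 1) * GG n T p' + (n - 1) := by ring
    have hn2 : n - 2 + 1 = n - 1 := by omega
    linarith
  · -- p₀.val ∈ {1, 2}, p'.val = 3 % n
    have hAp' : AA n p' = n - 2 := by simp only [AA, DD]; split_ifs <;> omega
    by_cases h1S : (1 : Fin n) ∈ S
    · refine ⟨1, h1S, ?_⟩
      have hAp : AA n (1 : Fin n) = 0 := by
        simp only [AA, val_one (n := n) hn, DD]; split_ifs <;> omega
      have hG : GG n S 1 ≤ GG n T p' + 1 := by
        show (S.erase 1).sup (fun r => DD n r.val ((1 : Fin n)).val) ≤ GG n T p' + 1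
        apply Finset.sup_le
        intro q hq
        obtain ⟨hqp, hqS⟩ := Finset.mem_erase.mp hq
        have hq1 : q.val ≠ 1 := fun h => hqp (Fin.ext (by rw [h, val_one hn]))
        have hqlt := q.isLt
        by_cases hq2 : q.val = 2
        · have : DD n q.val ((1 : Fin n)).val = 1 := by
            rw [val_one hn, hq2]; simp [DD]
          rw [this]
          omega
        · have hqv := mapE_val hn q
          have hne : mapE n q ≠ p' := by
            intro h
            have hv := congrArg Fin.val h
            omega
          have hmem : mapE n q ∈ T.erase p' :=
            Finset.mem_erase.mpr ⟨hne, Finset.mem_image_of_mem _ hqS⟩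
          have hstep : DD n q.val ((1 : Fin n)).val ≤ DD n (mapE n q).val p'.val + 1 := by
            rw [val_one hn]
            simp only [DD]; split_ifs <;> omega
          exact le_trans hstep (Nat.add_le_add_right (Finset.le_sup (f := fun r => DD n r.val p'.val) hmem) 1)
      have hmul : (n - 1) * GG n S 1 ≤ (n - 1) * GG n T p' + (n - 1) := by
        calc (n - 1) * GG n S 1 ≤ (n - 1) * (GG n T p' + 1) :=
              Nat.mul_le_mul_left _ hG
          _ = (n - 1) * GG n T p' + (n - 1) := by ring
      have hn2 : n - 2 + 1 = n - 1 := by omega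
      linarith
    · -- 1 ∉ S, so p₀.val = 2
      have hp₀2 : p₀.val = 2 := by
        rcases hv12 with h | h
        · exfalso
          have e : p₀ = 1 := Fin.ext (h.trans (val_one hn).symm)
          rw [e] at hp₀S
          exact h1S hp₀S
        · exact h
      refine ⟨p₀, hp₀S, ?_⟩
      have hAp : AA n p₀ = n - 1 := by simp only [AA, DD]; split_ifs <;> omega
      have hG : GG n S p₀ ≤ GG n T p' := by
        show (S.erase p₀).sup (fun r => DD n r.val p₀.val) ≤ GG n T p'
        apply Finset.sup_le
        intro q hq
        obtain ⟨hqp, hqS⟩ := Finset.mem_erase.mp hq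
        have hq1 : q.val ≠ 1 := by
          intro h
          have e : q = 1 := Fin.ext (h.trans (val_one hn).symm)
          rw [e] at hqS
          exact h1S hqS
        have hq2 : q.val ≠ 2 := fun h => (fin_val_ne hqp) (by omega)
        have hqv := mapE_val hn q
        have hqlt := q.isLt
        have hne : mapE n q ≠ p' := by
          intro h
          have hv := congrArg Fin.val h
          omega
        have hmem : mapE n q ∈ T.erase p' :=
          Finset.mem_erase.mpr ⟨hne, Finset.mem_image_of_mem _ hqS⟩
        have hstep : DD n q.val p₀.val ≤ DD n (mapE n q).val p'.val := by
          simp only [DD]; split_ifs <;> omega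
        exact le_trans hstep (Finset.le_sup (f := fun r => DD n r.val p'.val) hmem)
      have hmul : (n - 1) * GG n S p₀ ≤ (n - 1) * GG n T p' :=
        Nat.mul_le_mul_left _ hG
      have hn2 : n - 2 + 1 = n - 1 := by omega
      linarith
  · -- 3 ≤ p₀.val, p'.val = p₀.val + 1
    refine ⟨p₀, hp₀S, ?_⟩
    have hAp : AA n p₀ ≤ AA n p' + 1 := by simp only [AA, DD]; split_ifs <;> omega
    have hG : GG n S p₀ ≤ GG n T p' := by
      show (S.erase p₀).sup (fun r => DD n r.val p₀.val) ≤ GG n T p'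
      apply Finset.sup_le
      intro q hq
      obtain ⟨hqp, hqS⟩ := Finset.mem_erase.mp hq
      have hqv := mapE_val hn q
      have hqlt := q.isLt
      have hqnev := fin_val_ne hqp
      have hne : mapE n q ≠ p' := by
        intro h
        have hv := congrArg Fin.val h
        omega
      have hmem : mapE n q ∈ T.erase p' :=
        Finset.mem_erase.mpr ⟨hne, Finset.mem_image_of_mem _ hqS⟩
      have hstep : DD n q.val p₀.val ≤ DD n (mapE n q).val p'.val := by
        simp only [DD]; split_ifs <;> omega
      exact le_trans hstep (Finset.le_sup (f := fun r => DD n r.val p'.val) hmem)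
    have hmul : (n - 1) * GG n S p₀ ≤ (n - 1) * GG n T p' :=
      Nat.mul_le_mul_left _ hG
    linarith
  · -- p₀.val = n - 1, p'.val = 0
    refine ⟨p₀, hp₀S, ?_⟩
    have hAp : AA n p₀ ≤ AA n p' + 1 := by simp only [AA, DD]; split_ifs <;> omega
    have hG : GG n S p₀ ≤ GG n T p' := by
      show (S.erase p₀).sup (fun r => DD n r.val p₀.val) ≤ GG n T p'
      apply Finset.sup_le
      intro q hq
      obtain ⟨hqp, hqS⟩ := Finset.mem_erase.mp hq
      have hqv := mapE_val hn q
      have hqlt := q.isLt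
      have hqnev := fin_val_ne hqp
      have hne : mapE n q ≠ p' := by
        intro h
        have hv := congrArg Fin.val h
        omega
      have hmem : mapE n q ∈ T.erase p' :=
        Finset.mem_erase.mpr ⟨hne, Finset.mem_image_of_mem _ hqS⟩
      have hstep : DD n q.val p₀.val ≤ DD n (mapE n q).val p'.val := by
        simp only [DD]; split_ifs <;> omega
      exact le_trans hstep (Finset.le_sup (f := fun r => DD n r.val p'.val) hmem)
    have hmul : (n - 1) * GG n S p₀ ≤ (n - 1) * GG n T p' :=
      Nat.mul_le_mul_left _ hG
    linarith

/-- Any word synchronizing a set `S` has length at least `phi n S`. -/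
lemma phi_le_length (hn : 3 ≤ n) :
    ∀ (w : List (Fin 2)) (S : Finset (Fin n)),
      (∃ t, ∀ q ∈ S, w.foldl (fun s x => deltaAe n x s) q = t) →
      phi n S ≤ w.length := by
  intro w
  induction w with
  | nil =>
    intro S ⟨t, ht⟩
    have hsub : S ⊆ {t} := by
      intro q hq
      simp only [Finset.mem_singleton]
      simpa using ht q hq
    have : S.card ≤ 1 := le_trans (Finset.card_le_card hsub) (by simp)
    rw [phi, dif_neg (by omega)]
    simp
  | cons x w ih =>
    intro S ⟨t, ht⟩
    have hnext : ∃ t, ∀ q ∈ S.image (deltaAe n x),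
        w.foldl (fun s x => deltaAe n x s) q = t := by
      refine ⟨t, ?_⟩
      intro q' hq'
      obtain ⟨q, hq, rfl⟩ := Finset.mem_image.mp hq'
      exact ht q hq
    have hlip : phi n S ≤ phi n (S.image (deltaAe n x)) + 1 := by
      fin_cases x
      · exact lipA hn S
      · exact lipE hn S
    calc phi n S ≤ phi n (S.image (deltaAe n x)) + 1 := hlip
      _ ≤ w.length + 1 := Nat.add_le_add_right (ih _ hnext) 1
      _ = (x :: w).length := by simp
/-- The potential of the image of the full set under `e` is large. -/
lemma philow (hn : 3 ≤ n) :
    (n - 1) * (n - 2) + 1 ≤ phi n (Finset.univ.image (mapE n)) := by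
  set R := Finset.univ.image (mapE n) with hR
  have h1R : (1 : Fin n) ∉ R := by
    rw [hR, Finset.mem_image]
    rintro ⟨q, -, hq⟩
    exact mapE_ne_one hn q hq
  have h2mem : (2 : Fin n) ∈ R := mem_image_mapE hn 2 (by
    intro h
    have := congrArg Fin.val h
    rw [val_two hn, val_one hn] at this; omega)
  have h3mem : (3 : Fin n) ∈ R := mem_image_mapE hn 3 (by
    intro h
    have := congrArg Fin.val h
    rw [val_three (n := n) hn, val_one hn] at this
    have := mod3 (n := n) hn
    omega)
  have h23 : (2 : Fin n) ≠ 3 := by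
    intro h
    have := congrArg Fin.val h
    rw [val_two hn, val_three (n := n) hn] at this
    have := mod3 (n := n) hn
    omega
  have hcard : 2 ≤ R.card := Finset.one_lt_card.mpr ⟨2, h2mem, 3, h3mem, h23⟩
  rw [phi_eq R hcard]
  apply Finset.le_inf'
  intro p hpR
  have hplt := p.isLt
  have hpv1 : p.val ≠ 1 := by
    intro h
    have e : p = 1 := Fin.ext (h.trans (val_one hn).symm)
    rw [e] at hpR
    exact h1R hpR
  by_cases hp2 : p.val = 2
  · -- p = 2 : use 0 ∈ R
    have h0R : (0 : Fin n) ∈ R := mem_image_mapE hn 0 (by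
      intro h
      have := congrArg Fin.val h
      rw [val_zero, val_one hn] at this; omega)
    have h0e : (0 : Fin n) ∈ R.erase p := Finset.mem_erase.mpr
      ⟨by intro h; have := congrArg Fin.val h; rw [val_zero] at this; omega, h0R⟩
    have hG : n - 2 ≤ GG n R p := by
      rw [GG]
      refine le_trans (le_of_eq ?_) (Finset.le_sup h0e)
      rw [val_zero]
      simp only [DD]; split_ifs <;> omega
    have hA : AA n p = n - 1 := by simp only [AA, DD]; split_ifs <;> omega
    have hmul : (n - 1) * (n - 3) ≤ (n - 1) * (GG n R p - 1) :=
      Nat.mul_le_mul_left _ (by omega)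
    have hexp : (n - 1) * (n - 2) = (n - 1) * (n - 3) + (n - 1) := by
      have h32 : n - 2 = (n - 3) + 1 := by omega
      rw [h32, Nat.mul_add, Nat.mul_one]
    rw [trm]
    linarith
  · -- p ≠ 1, 2 : use p - 1 ∈ R
    have hq1v : (p - 1 : Fin n).val = DD n p.val 1 := by
      rw [val_sub, val_one hn]
    have hq1ne1 : (p - 1 : Fin n) ≠ 1 := by
      intro h
      have := congrArg Fin.val h
      rw [hq1v, val_one hn] at this
      simp only [DD] at this
      split_ifs at this <;> omega
    have hq1R : (p - 1 : Fin n) ∈ R := mem_image_mapE hn _ hq1ne1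
    have hq1nep : (p - 1 : Fin n) ≠ p := by
      intro h
      have := congrArg Fin.val h
      rw [hq1v] at this
      simp only [DD] at this
      split_ifs at this <;> omega
    have hq1e : (p - 1 : Fin n) ∈ R.erase p := Finset.mem_erase.mpr ⟨hq1nep, hq1R⟩
    have hG : n - 1 ≤ GG n R p := by
      rw [GG]
      refine le_trans (le_of_eq ?_) (Finset.le_sup hq1e)
      rw [hq1v]
      simp only [DD]; split_ifs <;> omega
    have hA : 1 ≤ AA n p := by simp only [AA, DD]; split_ifs <;> omega
    have hmul : (n - 1) * (n - 2) ≤ (n - 1) * (GG n R p - 1) :=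
      Nat.mul_le_mul_left _ (by omega)
    rw [trm]
    linarith

lemma arith_sq (hn : 3 ≤ n) : (n - 1) * (n - 2) + 2 = n ^ 2 - 3 * n + 4 := by
  have h1 : 3 * n ≤ n ^ 2 := by
    rw [pow_two]
    exact Nat.mul_le_mul_right n hn
  zify [h1, show 1 ≤ n by omega, show 2 ≤ n by omega]
  ring

/-- The lower bound : any synchronizing word has length at least `n² - 3n + 4`. -/
lemma lower_bound (hn : 3 ≤ n) (w : List (Fin 2)) (hw : IsSyncWord (deltaAe n) w) :
    n ^ 2 - 3 * n + 4 ≤ w.length := by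
  induction w with
  | nil =>
    exfalso
    obtain ⟨qs, h⟩ := hw
    have h0 := h 0
    have h1 := h 1
    simp only [List.foldl_nil] at h0 h1
    have : (0 : Fin n) = 1 := h0.trans h1.symm
    have := congrArg Fin.val this
    rw [val_zero, val_one hn] at this
    omega
  | cons x w ih =>
    obtain ⟨qs, h⟩ := hw
    have hx01 : x = 0 ∨ x = 1 := by
      have := x.isLt
      rcases (by omega : x.val = 0 ∨ x.val = 1) with hv | hv
      · exact Or.inl (Fin.ext hv)
      · exact Or.inr (Fin.ext hv)
    rcases hx01 with hx | hx
    · -- letter a : still synchronizing from the full set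
      rw [hx] at h
      have hw' : IsSyncWord (deltaAe n) w := by
        refine ⟨qs, fun r => ?_⟩
        have := h (r - 1)
        simp only [List.foldl_cons] at this
        have ha : deltaAe n 0 (r - 1) = r := by
          show mapA n (r - 1) = r
          simp [mapA]
        rwa [ha] at this
      have hle := ih hw'
      simp only [List.length_cons]
      exact le_trans hle (Nat.le_succ _)
    · -- letter e
      rw [hx] at h
      have hsync : ∃ t, ∀ q ∈ Finset.univ.image (mapE n),
          w.foldl (fun s x => deltaAe n x s) q = t := by
        refine ⟨qs, ?_⟩
        intro q' hq'
        obtain ⟨q, -, rfl⟩ := Finset.mem_image.mp hq'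
        have := h q
        simp only [List.foldl_cons] at this
        exact this
      have hlen := phi_le_length hn w _ hsync
      have hlow := philow (n := n) hn
      have harith := arith_sq (n := n) hn
      simp only [List.length_cons]
      linarith

end AeAux

/-! ### The upper bound : the explicit word synchronizes -/

namespace AeAux

variable {n : ℕ} [NeZero n]

/-- Folding over a block of `k` letters `a` adds `k`. -/
lemma foldl_rep_a (k : ℕ) (s : Fin n) :
    (List.replicate k (0 : Fin 2)).foldl (fun s x => deltaAe n x s) s = s + (k : Fin n) := by
  induction k generalizing s with
  | zero => simp
  | succ m ihm =>
    rw [List.replicate_succ, List.foldl_cons]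
    rw [ihm]
    show mapA n s + (m : Fin n) = s + ((m + 1 : ℕ) : Fin n)
    simp only [mapA]
    push_cast
    ring

lemma cast_n_sub_two (hn : 3 ≤ n) : ((n - 2 : ℕ) : Fin n) = -2 := by
  have h : ((n - 2 : ℕ) : Fin n) = (n : Fin n) - 2 := by
    push_cast [Nat.cast_sub (by omega : 2 ≤ n)]
    ring
  rw [h, Fin.natCast_self]
  ring

/-- The action of the block `u = e a^(n-2)`. -/
lemma foldl_u (hn : 3 ≤ n) (q : Fin n) :
    ((1 : Fin 2) :: List.replicate (n - 2) (0 : Fin 2)).foldl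
      (fun s x => deltaAe n x s) q = mapE n q - 2 := by
  rw [List.foldl_cons]
  have h1 : deltaAe n 1 q = mapE n q := rfl
  rw [h1, foldl_rep_a, cast_n_sub_two hn]
  ring

lemma u_zero (hn : 3 ≤ n) :
    ((1 : Fin 2) :: List.replicate (n - 2) (0 : Fin 2)).foldl
      (fun s x => deltaAe n x s) 0 = 0 := by
  rw [foldl_u hn]
  show mapE n 0 - 2 = 0
  simp [mapE]

lemma u_one (hn : 3 ≤ n) :
    ((1 : Fin 2) :: List.replicate (n - 2) (0 : Fin 2)).foldl
      (fun s x => deltaAe n x s) 1 = 1 := by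
  rw [foldl_u hn]
  show mapE n 1 - 2 = 1
  have h0 : (1 : Fin n) ≠ 0 := by
    intro h
    have := congrArg Fin.val h
    rw [val_one hn, val_zero] at this; omega
  have h13 : mapE n (1 : Fin n) = 3 := by simp [mapE, h0]
  rw [h13, ← two_add_one_eq_three]
  ring

lemma u_big (hn : 3 ≤ n) (q : Fin n) (hq : 2 ≤ q.val) :
    ((((1 : Fin 2) :: List.replicate (n - 2) (0 : Fin 2)).foldl
      (fun s x => deltaAe n x s) q : Fin n) : ℕ) = q.val - 1 := by
  rw [foldl_u hn]
  have hlt := q.isLt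
  by_cases h2 : q = 2
  · subst h2
    have : mapE n 2 = 3 := by
      have h0 : (2 : Fin n) ≠ 0 := by
        intro h; have := congrArg Fin.val h; rw [val_two hn, val_zero] at this; omega
      have h1 : (2 : Fin n) ≠ 1 := by
        intro h; have := congrArg Fin.val h; rw [val_two hn, val_one hn] at this; omega
      simp [mapE, h0, h1]
    rw [this]
    have h32 : (3 : Fin n) - 2 = 1 := by
      rw [← two_add_one_eq_three]; ring
    rw [h32, val_one hn, val_two hn]
  · have hq3 : 3 ≤ q.val := by
      rcases Nat.lt_or_ge q.val 3 with h | h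
      · exfalso; exact h2 (Fin.ext (by rw [val_two hn]; omega))
      · exact h
    have h0 : q ≠ 0 := by
      intro h; have := congrArg Fin.val h; rw [val_zero] at this; omega
    have h1 : q ≠ 1 := by
      intro h; have := congrArg Fin.val h; rw [val_one hn] at this; omega
    have he : mapE n q = q + 1 := by simp [mapE, h0, h1, h2]
    rw [he]
    have hq1 : q + 1 - 2 = q - 1 := by ring
    rw [hq1, val_sub, val_one hn]
    simp only [DD]
    split_ifs <;> omega

/-- Iterating `u` : fold over the flattened replicate. -/
lemma foldl_flatten_rep (u : List (Fin 2)) (m : ℕ) (q : Fin n) :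
    ((List.replicate m u).flatten).foldl (fun s x => deltaAe n x s) q =
      (fun r => u.foldl (fun s x => deltaAe n x s) r)^[m] q := by
  induction m generalizing q with
  | zero => simp
  | succ k ihk =>
    rw [List.replicate_succ, List.flatten_cons, List.foldl_append, ihk,
      Function.iterate_succ_apply]

/-- After `m` iterations of `u`, the value is `≤ 1` or has dropped by `m`. -/
lemma iter_u_drop (hn : 3 ≤ n) (m : ℕ) (q : Fin n) :
    (((fun r => ((1 : Fin 2) :: List.replicate (n - 2) (0 : Fin 2)).foldl
        (fun s x => deltaAe n x s) r)^[m] q : Fin n) : ℕ) ≤ 1 ∨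
    (((fun r => ((1 : Fin 2) :: List.replicate (n - 2) (0 : Fin 2)).foldl
        (fun s x => deltaAe n x s) r)^[m] q : Fin n) : ℕ) + m = q.val := by
  induction m with
  | zero => right; simp
  | succ k ihk =>
    rw [Function.iterate_succ_apply']
    set r := (fun r => ((1 : Fin 2) :: List.replicate (n - 2) (0 : Fin 2)).foldl
        (fun s x => deltaAe n x s) r)^[k] q with hr
    rcases ihk with h | h
    · left
      -- r.val ≤ 1, so r = 0 or r = 1 and u fixes it
      rcases Nat.le_one_iff_eq_zero_or_eq_one.mp h with h0 | h1
      · have : r = 0 := Fin.ext (by rw [h0, val_zero])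
        rw [this, u_zero hn, val_zero]; omega
      · have : r = 1 := Fin.ext (by rw [h1, val_one hn])
        rw [this, u_one hn, val_one hn]
    · rcases Nat.lt_or_ge r.val 2 with hlt | hge
      · left
        rcases Nat.le_one_iff_eq_zero_or_eq_one.mp (by omega : r.val ≤ 1) with h0 | h1
        · have : r = 0 := Fin.ext (by rw [h0, val_zero])
          rw [this, u_zero hn, val_zero]; omega
        · have : r = 1 := Fin.ext (by rw [h1, val_one hn])
          rw [this, u_one hn, val_one hn]
      · right
        rw [u_big hn r hge]
        omega

/-- The full word synchronizes everything to `3`. -/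
lemma word_syncs (hn : 3 ≤ n) (q : Fin n) :
    (((List.replicate (n - 2) ((1 : Fin 2) :: List.replicate (n - 2) (0 : Fin 2))).flatten
      ++ [(0 : Fin 2), 1]).foldl (fun s x => deltaAe n x s) q = 3) := by
  rw [List.foldl_append, foldl_flatten_rep]
  have hdrop := iter_u_drop hn (n - 2) q
  set r := (fun r => ((1 : Fin 2) :: List.replicate (n - 2) (0 : Fin 2)).foldl
      (fun s x => deltaAe n x s) r)^[n - 2] q with hrdef
  have hlt := q.isLt
  have hr1 : r.val ≤ 1 := by
    rcases hdrop with h | h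
    · exact h
    · omega
  have hfin : ∀ z : Fin n, z.val ≤ 1 →
      ([(0 : Fin 2), 1].foldl (fun s x => deltaAe n x s) z = 3) := by
    intro z hz
    simp only [List.foldl_cons, List.foldl_nil]
    have ha : deltaAe n 0 z = mapA n z := rfl
    have he : ∀ y, deltaAe n 1 y = mapE n y := fun y => rfl
    rw [ha, he]
    rcases Nat.le_one_iff_eq_zero_or_eq_one.mp hz with h0 | h1
    · have hz0 : z = 0 := Fin.ext (by rw [h0, val_zero])
      subst hz0
      have : mapA n 0 = 1 := by
        simp [mapA]
      rw [this]
      have h0' : (1 : Fin n) ≠ 0 := by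
        intro h; have := congrArg Fin.val h; rw [val_one hn, val_zero] at this; omega
      simp [mapE, h0']
    · have hz1 : z = 1 := Fin.ext (by rw [h1, val_one hn])
      subst hz1
      have : mapA n 1 = 2 := by
        show (1 : Fin n) + 1 = 2
        norm_num
      rw [this]
      have h0' : (2 : Fin n) ≠ 0 := by
        intro h; have := congrArg Fin.val h; rw [val_two hn, val_zero] at this; omega
      have h1' : (2 : Fin n) ≠ 1 := by
        intro h; have := congrArg Fin.val h; rw [val_two hn, val_one hn] at this; omega
      simp [mapE, h0', h1']
  exact hfin r hr1

lemma word_length (hn : 3 ≤ n) :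
    ((List.replicate (n - 2) ((1 : Fin 2) :: List.replicate (n - 2) (0 : Fin 2))).flatten
      ++ [(0 : Fin 2), 1]).length = n ^ 2 - 3 * n + 4 := by
  have hu : ((1 : Fin 2) :: List.replicate (n - 2) (0 : Fin 2)).length = n - 1 := by
    simp [List.length_replicate]
    omega
  have hfl : ∀ (m : ℕ) (u : List (Fin 2)),
      ((List.replicate m u).flatten).length = m * u.length := by
    intro m u
    induction m with
    | zero => simp
    | succ k ihk => rw [List.replicate_succ, List.flatten_cons,
        List.length_append, ihk]; ring
  rw [List.length_append, hfl, hu]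
  have h1 : 3 * n ≤ n ^ 2 := by
    rw [pow_two]; exact Nat.mul_le_mul_right n hn
  have h2 : (n - 2) * (n - 1) + 2 = n ^ 2 - 3 * n + 4 := by
    zify [h1, show 1 ≤ n by omega, show 2 ≤ n by omega]
    ring
  simp only [List.length_cons, List.length_nil]
  omega

end AeAux

open AeAux in
/-- for n ≥ 3, `A^{-bcd}` has shortest synchronizing word length
`n² - 3n + 4`; in particular `(ea^{n-2})^{n-2}ae` is synchronizing of that length,
using that `1·ea^{n-2} = 1`, `2·ea^{n-2} = 2` and `q·ea^{n-2} = q-1` for `3 ≤ q ≤ n`. -/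
theorem shortestSync_Aminusbcd (n : ℕ) (hn : 3 ≤ n) [NeZero n] :
    let u : List (Fin 2) := 1 :: List.replicate (n - 2) 0
    let w : List (Fin 2) := (List.replicate (n - 2) u).flatten ++ [0, 1]
    shortestSync (deltaAe n) = n ^ 2 - 3 * n + 4 ∧
    w.length = n ^ 2 - 3 * n + 4 ∧ IsSyncWord (deltaAe n) w ∧
    u.foldl (fun s x => deltaAe n x s) 0 = 0 ∧
    u.foldl (fun s x => deltaAe n x s) 1 = 1 ∧
    ∀ q : Fin n, 2 ≤ (q : ℕ) →
      ((u.foldl (fun s x => deltaAe n x s) q : Fin n) : ℕ) = (q : ℕ) - 1 := by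
  intro u w
  have hsync : IsSyncWord (deltaAe n) w := ⟨3, fun q => word_syncs hn q⟩
  have hlen : w.length = n ^ 2 - 3 * n + 4 := word_length hn
  refine ⟨?_, hlen, hsync, u_zero hn, u_one hn, fun q hq => u_big hn q hq⟩
  have hmem : (n ^ 2 - 3 * n + 4) ∈
      {L | ∃ w : List (Fin 2), IsSyncWord (deltaAe n) w ∧ w.length = L} :=
    ⟨w, hsync, hlen⟩
  apply le_antisymm
  · exact Nat.sInf_le hmem
  · apply le_csInf ⟨_, hmem⟩
    rintro L ⟨w', hw', rfl⟩
    exact lower_bound hn w' hw'
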